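/- Let β₀, β₁, κ > 0, let s ≥ 1 be an integer, and for t > 0 let γ_t := κ ∇ w_t where w_t = −((β₀+β₁)/κ) Δ v_t and v_t(x) = t³ V(x/t) + g(x), with V(y₁,y₂) = y₁ e^{−y₁} cos(y₂) and g(x₁,x₂) = sin(πx₁) sin(πx₂). Then there exist constants c > 0, C > 0 and t₀ ∈ (0, 1] such that for all t ∈ (0, t₀): c · t^{1/2 − s} ≤ ( Σ_{a+b=s} Σ_{i=1,2} ∫_{(0,1)²} |∂₁^a ∂₂^b (γ_t)_i(x)|² dx )^{1/2} ≤ C · t^{1/2 − s}. In other words, the H^s seminorm of the shear strain γ_t on the unit square behaves like t^{−s+1/2} as t → 0⁺. -/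

import Mathlib

noncomputable section

open Real MeasureTheory

/-- First partial derivative `∂₁` of a function on `ℝ²`. -/
def pd1 (f : ℝ × ℝ → ℝ) : ℝ × ℝ → ℝ := fun p => deriv (fun s => f (s, p.2)) p.1

/-- Second partial derivative `∂₂` of a function on `ℝ²`. -/
def pd2 (f : ℝ × ℝ → ℝ) : ℝ × ℝ → ℝ := fun p => deriv (fun s => f (p.1, s)) p.2

/-- Laplacian `Δ = ∂₁² + ∂₂²` on `ℝ²`. -/
def lap (f : ℝ × ℝ → ℝ) : ℝ × ℝ → ℝ := fun p => pd1 (pd1 f) p + pd2 (pd2 f) p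

/-- `V(y₁, y₂) = y₁ e^{−y₁} cos(y₂)`. -/
def V : ℝ × ℝ → ℝ := fun y => y.1 * Real.exp (-y.1) * Real.cos y.2

/-- `g(x₁, x₂) = sin(π x₁) sin(π x₂)`. -/
def g : ℝ × ℝ → ℝ := fun x => Real.sin (π * x.1) * Real.sin (π * x.2)

/-- `v_t(x) = t³ V(x/t) + g(x)`. -/
def vt (t : ℝ) : ℝ × ℝ → ℝ := fun x => t ^ 3 * V (x.1 / t, x.2 / t) + g x

/-- `w_t = −((β₀ + β₁)/κ) Δ v_t`. -/
def wt (β₀ β₁ κ t : ℝ) : ℝ × ℝ → ℝ := fun x => -((β₀ + β₁) / κ) * lap (vt t) x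

/-- First component of the shear strain `γ_t = κ ∇ w_t`. -/
def gam1 (β₀ β₁ κ t : ℝ) : ℝ × ℝ → ℝ := fun x => κ * pd1 (wt β₀ β₁ κ t) x

/-- Second component of the shear strain `γ_t = κ ∇ w_t`. -/
def gam2 (β₀ β₁ κ t : ℝ) : ℝ × ℝ → ℝ := fun x => κ * pd2 (wt β₀ β₁ κ t) x

/-- The open unit square `(0,1)² ⊂ ℝ²`. -/
def usq : Set (ℝ × ℝ) := Set.Ioo (0 : ℝ) 1 ×ˢ Set.Ioo (0 : ℝ) 1


/-! ### Auxiliary machinery -/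

/-- The basic family of functions closed under `pd1`/`pd2`. -/
def bf (A B μ φ ψ χ : ℝ) : ℝ × ℝ → ℝ :=
  fun x => A * Real.exp (-(μ * x.1)) * Real.cos (μ * x.2 + φ)
    + B * Real.cos (π * x.1 + ψ) * Real.cos (π * x.2 + χ)

lemma hasDerivAt_expNeg (μ x : ℝ) :
    HasDerivAt (fun u => Real.exp (-(μ * u))) (-μ * Real.exp (-(μ * x))) x := by
  have h : HasDerivAt (fun u : ℝ => -(μ * u)) (-(μ * 1)) x :=
    ((hasDerivAt_id x).const_mul μ).neg
  simpa [mul_comm] using h.exp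

lemma hasDerivAt_cosLin (c φ x : ℝ) :
    HasDerivAt (fun u => Real.cos (c * u + φ)) (c * Real.cos (c * x + φ + π/2)) x := by
  have h : HasDerivAt (fun u : ℝ => c * u + φ) (c * 1) x :=
    ((hasDerivAt_id x).const_mul c).add_const φ
  have h2 := h.cos
  rw [Real.cos_add_pi_div_two]
  simpa [mul_comm] using h2

lemma pd1_bf (A B μ φ ψ χ : ℝ) :
    pd1 (bf A B μ φ ψ χ) = bf (-μ * A) (π * B) μ φ (ψ + π/2) χ := by
  funext p
  have h1 := ((hasDerivAt_expNeg μ p.1).const_mul A).mul_const (Real.cos (μ * p.2 + φ))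
  have h2 := ((hasDerivAt_cosLin π ψ p.1).const_mul B).mul_const (Real.cos (π * p.2 + χ))
  show deriv (fun u => A * Real.exp (-(μ * u)) * Real.cos (μ * p.2 + φ)
    + B * Real.cos (π * u + ψ) * Real.cos (π * p.2 + χ)) p.1 = _
  erw [(h1.add h2).deriv]
  show _ = bf _ _ _ _ _ _ p
  unfold bf
  ring_nf

lemma pd2_bf (A B μ φ ψ χ : ℝ) :
    pd2 (bf A B μ φ ψ χ) = bf (μ * A) (π * B) μ (φ + π/2) ψ (χ + π/2) := by
  funext p
  have h1 := (hasDerivAt_cosLin μ φ p.2).const_mul (A * Real.exp (-(μ * p.1)))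
  have h2 := (hasDerivAt_cosLin π χ p.2).const_mul (B * Real.cos (π * p.1 + ψ))
  show deriv (fun u => A * Real.exp (-(μ * p.1)) * Real.cos (μ * u + φ)
    + B * Real.cos (π * p.1 + ψ) * Real.cos (π * u + χ)) p.2 = _
  erw [(h1.add h2).deriv]
  show _ = bf _ _ _ _ _ _ p
  unfold bf
  ring_nf

lemma pd1_iter_bf (a : ℕ) (A B μ φ ψ χ : ℝ) :
    pd1^[a] (bf A B μ φ ψ χ) = bf ((-μ)^a * A) (π^a * B) μ φ (ψ + a * (π/2)) χ := by
  induction a generalizing A B ψ with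
  | zero => simp
  | succ n ih =>
    rw [Function.iterate_succ_apply, pd1_bf, ih,
      show (-μ)^(n+1) * A = (-μ)^n * (-μ * A) by ring,
      show (π:ℝ)^(n+1) * B = π^n * (π * B) by ring,
      show ψ + ((n:ℕ)+1 : ℕ) * (π/2) = (ψ + π/2) + n * (π/2) by push_cast; ring]

lemma pd2_iter_bf (b : ℕ) (A B μ φ ψ χ : ℝ) :
    pd2^[b] (bf A B μ φ ψ χ) = bf (μ^b * A) (π^b * B) μ (φ + b * (π/2)) ψ (χ + b * (π/2)) := by
  induction b generalizing A B φ χ with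
  | zero => simp
  | succ n ih =>
    rw [Function.iterate_succ_apply, pd2_bf, ih,
      show μ^(n+1) * A = μ^n * (μ * A) by ring,
      show (π:ℝ)^(n+1) * B = π^n * (π * B) by ring,
      show φ + ((n:ℕ)+1 : ℕ) * (π/2) = (φ + π/2) + n * (π/2) by push_cast; ring,
      show χ + ((n:ℕ)+1 : ℕ) * (π/2) = (χ + π/2) + n * (π/2) by push_cast; ring]

/-! ### Computation of the shear strain -/

lemma he (t x : ℝ) :
    HasDerivAt (fun u => Real.exp (-(u / t))) (-(1/t) * Real.exp (-(x / t))) x := by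
  have h : HasDerivAt (fun u : ℝ => -(u / t)) (-(1/t)) x := by
    exact ((hasDerivAt_id x).div_const t).neg
  simpa [mul_comm] using h.exp

lemma hsin (c x : ℝ) :
    HasDerivAt (fun u => Real.sin (c * u)) (c * Real.cos (c * x)) x := by
  have h : HasDerivAt (fun u : ℝ => c * u) (c * 1) x := (hasDerivAt_id x).const_mul c
  simpa [mul_comm] using h.sin

lemma hcos (c x : ℝ) :
    HasDerivAt (fun u => Real.cos (c * u)) (-(c * Real.sin (c * x))) x := by
  have h : HasDerivAt (fun u : ℝ => c * u) (c * 1) x := (hasDerivAt_id x).const_mul c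
  simpa [mul_comm] using h.cos

lemma hdiv (t x : ℝ) : HasDerivAt (fun u : ℝ => u / t) (1/t) x := by
  simpa using (hasDerivAt_id x).div_const t

lemma hv1 (t : ℝ) (ht : 0 < t) :
    pd1 (vt t) = fun x => (t^2 - t * x.1) * Real.exp (-(x.1 / t)) * Real.cos (x.2 / t)
      + π * Real.cos (π * x.1) * Real.sin (π * x.2) := by
  funext p
  have h1 := (((hdiv t p.1).mul (he t p.1)).mul_const (Real.cos (p.2 / t))).const_mul (t^3)
  have h2 := (hsin π p.1).mul_const (Real.sin (π * p.2))
  show deriv (fun u => t^3 * (u / t * Real.exp (-(u / t)) * Real.cos (p.2 / t))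
    + Real.sin (π * u) * Real.sin (π * p.2)) p.1 = _
  erw [(h1.add h2).deriv]
  field_simp
  ring

lemma hv11 (t : ℝ) (ht : 0 < t) :
    pd1 (pd1 (vt t)) = fun x => (x.1 - 2*t) * Real.exp (-(x.1 / t)) * Real.cos (x.2 / t)
      - π^2 * Real.sin (π * x.1) * Real.sin (π * x.2) := by
  rw [hv1 t ht]
  funext p
  have hlin : HasDerivAt (fun u : ℝ => t^2 - t * u) (-t) p.1 := by
    exact ((hasDerivAt_const p.1 (t^2)).sub ((hasDerivAt_id p.1).const_mul t)).congr_deriv (by ring)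
  have h1 := (hlin.mul (he t p.1)).mul_const (Real.cos (p.2 / t))
  have h2 := ((hcos π p.1).const_mul π).mul_const (Real.sin (π * p.2))
  show deriv (fun u => (t^2 - t * u) * Real.exp (-(u / t)) * Real.cos (p.2 / t)
    + π * Real.cos (π * u) * Real.sin (π * p.2)) p.1 = _
  erw [(h1.add h2).deriv]
  field_simp
  ring

lemma hv2 (t : ℝ) (ht : 0 < t) :
    pd2 (vt t) = fun x => -(t * x.1) * Real.exp (-(x.1 / t)) * Real.sin (x.2 / t)
      + π * Real.sin (π * x.1) * Real.cos (π * x.2) := by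
  funext p
  have hcd : HasDerivAt (fun u : ℝ => Real.cos (u / t)) (-(Real.sin (p.2 / t)) * (1/t)) p.2 :=
    (hdiv t p.2).cos
  have h1 := (hcd.const_mul (p.1 / t * Real.exp (-(p.1 / t)))).const_mul (t^3)
  have h2 := (hsin π p.2).const_mul (Real.sin (π * p.1))
  show deriv (fun u => t^3 * (p.1 / t * Real.exp (-(p.1 / t)) * Real.cos (u / t))
    + Real.sin (π * p.1) * Real.sin (π * u)) p.2 = _
  erw [(h1.add h2).deriv]
  field_simp

lemma hv22 (t : ℝ) (ht : 0 < t) :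
    pd2 (pd2 (vt t)) = fun x => -(x.1) * Real.exp (-(x.1 / t)) * Real.cos (x.2 / t)
      - π^2 * Real.sin (π * x.1) * Real.sin (π * x.2) := by
  rw [hv2 t ht]
  funext p
  have hsn : HasDerivAt (fun u : ℝ => Real.sin (u / t)) (Real.cos (p.2 / t) * (1/t)) p.2 :=
    (hdiv t p.2).sin
  have h1 := hsn.const_mul (-(t * p.1) * Real.exp (-(p.1 / t)))
  have h2 := (hcos π p.2).const_mul (π * Real.sin (π * p.1))
  show deriv (fun u => -(t * p.1) * Real.exp (-(p.1 / t)) * Real.sin (u / t)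
    + π * Real.sin (π * p.1) * Real.cos (π * u)) p.2 = _
  erw [(h1.add h2).deriv]
  field_simp
  ring

lemma hw (β₀ β₁ κ t : ℝ) (ht : 0 < t) :
    wt β₀ β₁ κ t = fun x => -((β₀ + β₁) / κ) *
      (-(2*t) * Real.exp (-(x.1 / t)) * Real.cos (x.2 / t)
        - 2*π^2 * Real.sin (π * x.1) * Real.sin (π * x.2)) := by
  funext p
  show -((β₀ + β₁) / κ) * (pd1 (pd1 (vt t)) p + pd2 (pd2 (vt t)) p) = _
  rw [hv11 t ht, hv22 t ht]
  ring

lemma gam1_eq (β₀ β₁ κ t : ℝ) (ht : 0 < t) (hκ : κ ≠ 0) :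
    gam1 β₀ β₁ κ t = bf (-(2*(β₀+β₁))) (2*(β₀+β₁)*π^3) (1/t) 0 0 (-(π/2)) := by
  funext p
  have hfun : (fun u => wt β₀ β₁ κ t (u, p.2)) = fun u => -((β₀ + β₁) / κ) *
      (-(2*t) * Real.exp (-(u / t)) * Real.cos (p.2 / t)
        - 2*π^2 * Real.sin (π * u) * Real.sin (π * p.2)) := by
    funext u; rw [hw β₀ β₁ κ t ht]
  have h1 := ((he t p.1).const_mul (-(2*t))).mul_const (Real.cos (p.2 / t))
  have h2 := ((hsin π p.1).const_mul (2*π^2)).mul_const (Real.sin (π * p.2))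
  have h3 := (h1.sub h2).const_mul (-((β₀ + β₁) / κ))
  show κ * deriv (fun u => wt β₀ β₁ κ t (u, p.2)) p.1 = _
  erw [hfun, h3.deriv]
  show _ = bf _ _ _ _ _ _ p
  unfold bf
  have hc : Real.cos (π * p.2 + -(π/2)) = Real.sin (π * p.2) := by
    rw [show π * p.2 + -(π/2) = -(π/2 - π * p.2) by ring, Real.cos_neg, Real.cos_pi_div_two_sub]
  rw [hc]
  field_simp
  ring

lemma gam2_eq (β₀ β₁ κ t : ℝ) (ht : 0 < t) (hκ : κ ≠ 0) :
    gam2 β₀ β₁ κ t = bf (-(2*(β₀+β₁))) (2*(β₀+β₁)*π^3) (1/t) (-(π/2)) (-(π/2)) 0 := by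
  funext p
  have hfun : (fun u => wt β₀ β₁ κ t (p.1, u)) = fun u => -((β₀ + β₁) / κ) *
      (-(2*t) * Real.exp (-(p.1 / t)) * Real.cos (u / t)
        - 2*π^2 * Real.sin (π * p.1) * Real.sin (π * u)) := by
    funext u; rw [hw β₀ β₁ κ t ht]
  have hcd : HasDerivAt (fun u : ℝ => Real.cos (u / t)) (-(Real.sin (p.2 / t)) * (1/t)) p.2 :=
    (hdiv t p.2).cos
  have h1 := hcd.const_mul (-(2*t) * Real.exp (-(p.1 / t)))
  have h2 := (hsin π p.2).const_mul (2*π^2 * Real.sin (π * p.1))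
  have h3 := (h1.sub h2).const_mul (-((β₀ + β₁) / κ))
  show κ * deriv (fun u => wt β₀ β₁ κ t (p.1, u)) p.2 = _
  erw [hfun, h3.deriv]
  show _ = bf _ _ _ _ _ _ p
  unfold bf
  have hc1 : Real.cos (1/t * p.2 + -(π/2)) = Real.sin (1/t * p.2) := by
    rw [show 1/t * p.2 + -(π/2) = -(π/2 - 1/t * p.2) by ring, Real.cos_neg,
      Real.cos_pi_div_two_sub]
  have hc2 : Real.cos (π * p.1 + -(π/2)) = Real.sin (π * p.1) := by
    rw [show π * p.1 + -(π/2) = -(π/2 - π * p.1) by ring, Real.cos_neg, Real.cos_pi_div_two_sub]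
  rw [hc1, hc2, show Real.sin (1/t * p.2) = Real.sin (p.2 / t) by rw [one_div, inv_mul_eq_div]]
  field_simp
  ring

/-! ### Integral estimates -/

lemma usq_meas : MeasurableSet usq := measurableSet_Ioo.prod measurableSet_Ioo

lemma integrableOn_usq {f : ℝ × ℝ → ℝ} (hf : Continuous f) : IntegrableOn f usq := by
  have h : IntegrableOn f ((Set.Icc (0:ℝ) 1) ×ˢ (Set.Icc (0:ℝ) 1)) :=
    hf.continuousOn.integrableOn_compact (isCompact_Icc.prod isCompact_Icc)
  exact h.mono_set (Set.prod_mono Set.Ioo_subset_Icc_self Set.Ioo_subset_Icc_self)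

lemma bf_cont (A B μ φ ψ χ : ℝ) : Continuous (bf A B μ φ ψ χ) := by
  unfold bf; fun_prop

lemma int_prod (u v : ℝ → ℝ) :
    ∫ x in usq, u x.1 * v x.2
      = (∫ y in Set.Ioo (0:ℝ) 1, u y) * ∫ y in Set.Ioo (0:ℝ) 1, v y := by
  rw [usq, Measure.volume_eq_prod, ← Measure.prod_restrict, integral_prod_mul]

lemma Jexp (c : ℝ) (hc : 0 < c) :
    ∫ y in Set.Ioo (0:ℝ) 1, Real.exp (-(c*y)) = (1 - Real.exp (-c)) / c := by
  rw [← integral_Ioc_eq_integral_Ioo, ← intervalIntegral.integral_of_le zero_le_one]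
  have h : ∀ x ∈ Set.uIcc (0:ℝ) 1,
      HasDerivAt (fun u => -(1/c) * Real.exp (-(c*u))) (Real.exp (-(c*x))) x := by
    intro x _
    have h1 : HasDerivAt (fun u : ℝ => -(c*u)) (-c) x := by
      exact ((hasDerivAt_id x).const_mul c).neg.congr_deriv (by ring)
    have h2 := h1.exp.const_mul (-(1/c))
    refine h2.congr_deriv ?_
    field_simp
  have hint : IntervalIntegrable (fun y => Real.exp (-(c*y))) volume 0 1 :=
    (by fun_prop : Continuous fun y : ℝ => Real.exp (-(c*y))).intervalIntegrable 0 1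
  rw [intervalIntegral.integral_eq_sub_of_hasDerivAt h hint]
  simp
  field_simp
  ring

lemma int_one : (∫ _ in Set.Ioo (0:ℝ) 1, (1:ℝ)) = 1 := by
  simp [Real.volume_Ioo]

lemma int_bf_sq_le (A B μ φ ψ χ : ℝ) (hμ : 0 < μ) :
    ∫ x in usq, (bf A B μ φ ψ χ x)^2 ≤ A^2 / μ + 2*B^2 := by
  have hle : ∀ x ∈ usq, (bf A B μ φ ψ χ x)^2
      ≤ 2*A^2 * Real.exp (-(2*μ*x.1)) + 2*B^2 := by
    intro x _
    have e1 : Real.exp (-(μ*x.1)) ^ 2 = Real.exp (-(2*μ*x.1)) := by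
      rw [sq, ← Real.exp_add]; ring_nf
    unfold bf
    nlinarith [Real.cos_sq_le_one (μ*x.2+φ), Real.cos_sq_le_one (π*x.1+ψ),
      Real.cos_sq_le_one (π*x.2+χ),
      sq_nonneg (A * Real.exp (-(μ*x.1)) * Real.cos (μ*x.2+φ)
        - B * Real.cos (π*x.1+ψ) * Real.cos (π*x.2+χ)),
      sq_nonneg (A * Real.exp (-(μ*x.1))), sq_nonneg B,
      sq_nonneg (B * Real.cos (π*x.1+ψ)), Real.exp_pos (-(μ*x.1)),
      sq_nonneg (A * Real.exp (-(μ*x.1)) * Real.cos (μ*x.2+φ)),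
      sq_nonneg (B * Real.cos (π*x.1+ψ) * Real.cos (π*x.2+χ))]
  have h1 : IntegrableOn (fun x : ℝ × ℝ => (bf A B μ φ ψ χ x)^2) usq :=
    integrableOn_usq ((bf_cont A B μ φ ψ χ).pow 2)
  have h2 : IntegrableOn (fun x : ℝ × ℝ => 2*A^2 * Real.exp (-(2*μ*x.1)) + 2*B^2) usq :=
    integrableOn_usq (by fun_prop)
  have hmono := setIntegral_mono_on h1 h2 usq_meas hle
  have hsplit : ∫ x in usq, (2*A^2 * Real.exp (-(2*μ*x.1)) + 2*B^2)
      = 2*A^2 * ((1 - Real.exp (-(2*μ)))/(2*μ)) + 2*B^2 := by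
    have heq : (fun x : ℝ × ℝ => 2*A^2 * Real.exp (-(2*μ*x.1)) + 2*B^2)
        = fun x => (2*A^2 * Real.exp (-(2*μ*x.1)) + 2*B^2) * (1:ℝ) := by
      funext x; ring
    rw [heq, int_prod (fun y => 2*A^2 * Real.exp (-(2*μ*y)) + 2*B^2) (fun _ => (1:ℝ)), int_one,
      mul_one]
    have hadd : ∫ y in Set.Ioo (0:ℝ) 1, (2*A^2 * Real.exp (-(2*μ*y)) + 2*B^2)
        = 2*A^2 * ((1 - Real.exp (-(2*μ)))/(2*μ)) + 2*B^2 := by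
      rw [integral_add (by
          have : IntegrableOn (fun y : ℝ => 2*A^2 * Real.exp (-(2*μ*y))) (Set.Icc (0:ℝ) 1) :=
            (by fun_prop : Continuous fun y : ℝ => 2*A^2 * Real.exp (-(2*μ*y))).continuousOn.integrableOn_compact isCompact_Icc
          exact this.mono_set Set.Ioo_subset_Icc_self)
        (integrableOn_const (s := Set.Ioo (0:ℝ) 1) (μ := volume) (C := 2*B^2) (by simp [Real.volume_Ioo])).integrable]
      rw [integral_const_mul, Jexp (2*μ) (by positivity)]
      simp [Real.volume_Ioo]
    exact hadd
  rw [hsplit] at hmono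
  have h3 : 2*A^2 * ((1 - Real.exp (-(2*μ)))/(2*μ)) ≤ 2*A^2 * (1/(2*μ)) := by
    gcongr
    · nlinarith [Real.exp_pos (-(2*μ))]
  have h4 : 2*A^2 * (1/(2*μ)) = A^2/μ := by field_simp
  linarith

lemma int_pair_ge (A B μ ψ₁ χ₁ ψ₂ χ₂ : ℝ) (hμ : 0 < μ) :
    A^2/2 * ((1 - Real.exp (-(2*μ)))/(2*μ)) - 2*B^2
      ≤ (∫ x in usq, (bf A B μ 0 ψ₁ χ₁ x)^2) + ∫ x in usq, (bf A B μ (-(π/2)) ψ₂ χ₂ x)^2 := by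
  have hint1 : IntegrableOn (fun x : ℝ × ℝ => (bf A B μ 0 ψ₁ χ₁ x)^2) usq :=
    integrableOn_usq ((bf_cont _ _ _ _ _ _).pow 2)
  have hint2 : IntegrableOn (fun x : ℝ × ℝ => (bf A B μ (-(π/2)) ψ₂ χ₂ x)^2) usq :=
    integrableOn_usq ((bf_cont _ _ _ _ _ _).pow 2)
  have hsum : (∫ x in usq, (bf A B μ 0 ψ₁ χ₁ x)^2) + ∫ x in usq, (bf A B μ (-(π/2)) ψ₂ χ₂ x)^2
      = ∫ x in usq, ((bf A B μ 0 ψ₁ χ₁ x)^2 + (bf A B μ (-(π/2)) ψ₂ χ₂ x)^2) :=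
    (integral_add hint1 hint2).symm
  have hlow : ∀ x ∈ usq, A^2/2 * Real.exp (-(2*μ*x.1)) - 2*B^2
      ≤ (bf A B μ 0 ψ₁ χ₁ x)^2 + (bf A B μ (-(π/2)) ψ₂ χ₂ x)^2 := by
    intro x _
    have hc2 : Real.cos (μ*x.2 + -(π/2)) = Real.sin (μ*x.2) := by
      rw [show μ*x.2 + -(π/2) = -(π/2 - μ*x.2) by ring, Real.cos_neg, Real.cos_pi_div_two_sub]
    have e1 : Real.exp (-(μ*x.1)) ^ 2 = Real.exp (-(2*μ*x.1)) := by
      rw [sq, ← Real.exp_add]; ring_nf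
    have pyth := Real.sin_sq_add_cos_sq (μ*x.2)
    unfold bf
    rw [hc2, add_zero]
    set e := Real.exp (-(μ*x.1)) with he
    set u₁ := A * e * Real.cos (μ*x.2) with hu1
    set u₂ := A * e * Real.sin (μ*x.2) with hu2
    set q₁ := B * Real.cos (π*x.1+ψ₁) * Real.cos (π*x.2+χ₁) with hq1
    set q₂ := B * Real.cos (π*x.1+ψ₂) * Real.cos (π*x.2+χ₂) with hq2
    have key1 : u₁^2/2 - q₁^2 ≤ (u₁ + q₁)^2 := by nlinarith [sq_nonneg (u₁ + 2*q₁)]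
    have key2 : u₂^2/2 - q₂^2 ≤ (u₂ + q₂)^2 := by nlinarith [sq_nonneg (u₂ + 2*q₂)]
    have hb1 : q₁^2 ≤ B^2 := by
      rw [hq1]
      nlinarith [Real.cos_sq_le_one (π*x.1+ψ₁), Real.cos_sq_le_one (π*x.2+χ₁),
        sq_nonneg B, sq_nonneg (B * Real.cos (π*x.1+ψ₁))]
    have hb2 : q₂^2 ≤ B^2 := by
      rw [hq2]
      nlinarith [Real.cos_sq_le_one (π*x.1+ψ₂), Real.cos_sq_le_one (π*x.2+χ₂),
        sq_nonneg B, sq_nonneg (B * Real.cos (π*x.1+ψ₂))]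
    have husq : u₁^2 + u₂^2 = A^2 * Real.exp (-(2*μ*x.1)) := by
      have h0 : u₁^2 + u₂^2 = A^2 * e^2 * (Real.sin (μ*x.2)^2 + Real.cos (μ*x.2)^2) := by
        rw [hu1, hu2]; ring
      rw [h0, pyth, mul_one, he, e1]
    linarith
  have hintlow : IntegrableOn (fun x : ℝ × ℝ => A^2/2 * Real.exp (-(2*μ*x.1)) - 2*B^2) usq :=
    integrableOn_usq (by fun_prop)
  have hintsum : IntegrableOn
      (fun x : ℝ × ℝ => (bf A B μ 0 ψ₁ χ₁ x)^2 + (bf A B μ (-(π/2)) ψ₂ χ₂ x)^2) usq :=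
    hint1.add hint2
  have hmono := setIntegral_mono_on hintlow hintsum usq_meas hlow
  have hval : ∫ x in usq, (A^2/2 * Real.exp (-(2*μ*x.1)) - 2*B^2)
      = A^2/2 * ((1 - Real.exp (-(2*μ)))/(2*μ)) - 2*B^2 := by
    have heq : (fun x : ℝ × ℝ => A^2/2 * Real.exp (-(2*μ*x.1)) - 2*B^2)
        = fun x => (A^2/2 * Real.exp (-(2*μ*x.1)) - 2*B^2) * (1:ℝ) := by
      funext x; ring
    rw [heq, int_prod (fun y => A^2/2 * Real.exp (-(2*μ*y)) - 2*B^2) (fun _ => (1:ℝ)), int_one,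
      mul_one]
    rw [integral_sub (by
        have : IntegrableOn (fun y : ℝ => A^2/2 * Real.exp (-(2*μ*y))) (Set.Icc (0:ℝ) 1) :=
          (by fun_prop : Continuous fun y : ℝ => A^2/2 * Real.exp (-(2*μ*y))).continuousOn.integrableOn_compact isCompact_Icc
        exact this.mono_set Set.Ioo_subset_Icc_self)
      (integrableOn_const (s := Set.Ioo (0:ℝ) 1) (μ := volume) (C := 2*B^2) (by simp [Real.volume_Ioo])).integrable]
    rw [integral_const_mul, Jexp (2*μ) (by positivity)]
    simp [Real.volume_Ioo]
  rw [hval] at hmono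
  rw [hsum]
  exact hmono

set_option maxHeartbeats 1000000 in
/-- For `s ≥ 1`, the `H^s` seminorm of `γ_t` on the unit square behaves
like `t^{1/2 − s}` as `t → 0⁺`: there are `c, C > 0` and `t₀ ∈ (0,1]` with
`c t^{1/2−s} ≤ (Σ_{a+b=s} Σ_{i=1,2} ‖∂₁^a ∂₂^b (γ_t)_i‖²_{L²((0,1)²)})^{1/2} ≤ C t^{1/2−s}`
for all `t ∈ (0, t₀)`. -/
theorem stmt_9 (β₀ β₁ κ : ℝ) (hβ₀ : 0 < β₀) (hβ₁ : 0 < β₁) (hκ : 0 < κ)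
    (s : ℕ) (hs : 1 ≤ s) :
    ∃ c C t₀ : ℝ, 0 < c ∧ 0 < C ∧ 0 < t₀ ∧ t₀ ≤ 1 ∧
      ∀ t : ℝ, 0 < t → t < t₀ →
        c * t ^ ((1 : ℝ) / 2 - (s : ℝ)) ≤
          Real.sqrt (∑ a ∈ Finset.range (s + 1),
            ((∫ x in usq, (pd1^[a] (pd2^[s - a] (gam1 β₀ β₁ κ t)) x) ^ 2)
              + (∫ x in usq, (pd1^[a] (pd2^[s - a] (gam2 β₀ β₁ κ t)) x) ^ 2))) ∧
        Real.sqrt (∑ a ∈ Finset.range (s + 1),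
            ((∫ x in usq, (pd1^[a] (pd2^[s - a] (gam1 β₀ β₁ κ t)) x) ^ 2)
              + (∫ x in usq, (pd1^[a] (pd2^[s - a] (gam2 β₀ β₁ κ t)) x) ^ 2)))
          ≤ C * t ^ ((1 : ℝ) / 2 - (s : ℝ)) := by
  obtain ⟨Λ, hΛdef⟩ : ∃ Λ : ℝ, Λ = β₀ + β₁ := ⟨_, rfl⟩
  have hΛ : 0 < Λ := by rw [hΛdef]; linarith
  have hexp2 : Real.exp (-2 : ℝ) < 1 := by
    have := Real.exp_lt_exp.mpr (by norm_num : (-2:ℝ) < 0)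
    simpa using this
  have h1e : 0 < 1 - Real.exp (-2 : ℝ) := by linarith
  obtain ⟨Q, hQdef⟩ : ∃ Q : ℝ, Q = π^6 * ((π:ℝ)^s)^2 := ⟨_, rfl⟩
  have hQpos : 0 < Q := by rw [hQdef]; positivity
  obtain ⟨cl2, hcl2⟩ : ∃ c : ℝ, c = Λ^2 * (1 - Real.exp (-2 : ℝ)) / 2 := ⟨_, rfl⟩
  obtain ⟨cu2, hcu2⟩ : ∃ c : ℝ, c = 2*((s:ℝ)+1) * (4*Λ^2 + 8*Λ^2*Q) := ⟨_, rfl⟩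
  have hcl2pos : 0 < cl2 := by rw [hcl2]; positivity
  have hcu2pos : 0 < cu2 := by
    rw [hcu2]
    have : (0:ℝ) < (s:ℝ) + 1 := by positivity
    positivity
  refine ⟨Real.sqrt cl2, Real.sqrt cu2, min 1 ((1 - Real.exp (-2:ℝ)) / (16*Q)),
    Real.sqrt_pos.mpr hcl2pos, Real.sqrt_pos.mpr hcu2pos,
    lt_min one_pos (div_pos h1e (by positivity)), min_le_left _ _, ?_⟩
  intro t ht htlt
  have ht1 : t ≤ 1 := le_of_lt (lt_of_lt_of_le htlt (min_le_left _ _))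
  have htQ : t < (1 - Real.exp (-2:ℝ)) / (16*Q) := lt_of_lt_of_le htlt (min_le_right _ _)
  obtain ⟨μ, hμdef⟩ : ∃ μ : ℝ, μ = 1/t := ⟨_, rfl⟩
  have hμ : 0 < μ := by rw [hμdef]; positivity
  have hμ1 : 1 ≤ μ := by rw [hμdef, le_div_iff₀ ht]; linarith
  have hκ' : κ ≠ 0 := ne_of_gt hκ
  obtain ⟨A, hA⟩ : ∃ A : ℝ, A = -(2*Λ) := ⟨_, rfl⟩
  obtain ⟨B, hB⟩ : ∃ B : ℝ, B = 2*Λ*π^3 := ⟨_, rfl⟩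
  have hg1 : gam1 β₀ β₁ κ t = bf A B μ 0 0 (-(π/2)) := by
    rw [hA, hB, hμdef, hΛdef]; exact gam1_eq β₀ β₁ κ t ht hκ'
  have hg2 : gam2 β₀ β₁ κ t = bf A B μ (-(π/2)) (-(π/2)) 0 := by
    rw [hA, hB, hμdef, hΛdef]; exact gam2_eq β₀ β₁ κ t ht hκ'
  obtain ⟨T, hT⟩ : ∃ T : ℝ, T = t * (μ^s)^2 := ⟨_, rfl⟩
  have hTpos : 0 < T := by rw [hT]; positivity
  have hTμ : μ ≤ T := by
    have h2s : μ^2 ≤ μ^(s*2) := pow_le_pow_right₀ hμ1 (by omega)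
    have h1 : (μ^s)^2 = μ^(s*2) := (pow_mul μ s 2).symm
    have h2 : t * μ^2 = μ := by rw [hμdef]; field_simp
    calc μ = t * μ^2 := h2.symm
      _ ≤ t * μ^(s*2) := by nlinarith
      _ = T := by rw [hT, h1]
  have hT1 : 1 ≤ T := le_trans hμ1 hTμ
  have hTt : 1/t ≤ T := by rw [← hμdef]; exact hTμ
  have hsqrtT : Real.sqrt T = t ^ ((1:ℝ)/2 - (s:ℝ)) := by
    rw [hT, hμdef, Real.sqrt_mul ht.le, Real.sqrt_sq (by positivity)]
    rw [Real.rpow_sub ht, ← Real.sqrt_eq_rpow, Real.rpow_natCast]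
    rw [one_div, inv_pow, div_eq_mul_inv]
  have hA2 : ∀ a, a ≤ s → ((-μ)^a * (μ^(s-a) * A))^2 = 4*Λ^2 * (μ^s)^2 := by
    intro a ha
    have hneg : ((-μ)^a)^2 = (μ^a)^2 := by
      rw [← pow_mul, ← pow_mul]; exact Even.neg_pow ⟨a, by ring⟩ μ
    calc ((-μ)^a * (μ^(s-a) * A))^2 = ((-μ)^a)^2 * (μ^(s-a))^2 * A^2 := by ring
      _ = (μ^a * μ^(s-a))^2 * A^2 := by rw [hneg]; ring
      _ = (μ^s)^2 * A^2 := by rw [← pow_add, Nat.add_sub_cancel' ha]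
      _ = 4*Λ^2 * (μ^s)^2 := by rw [hA]; ring
  have hB2 : ∀ a, a ≤ s → ((π:ℝ)^a * (π^(s-a) * B))^2 = 4*Λ^2 * Q := by
    intro a ha
    calc ((π:ℝ)^a * (π^(s-a) * B))^2 = ((π:ℝ)^a * π^(s-a))^2 * B^2 := by ring
      _ = ((π:ℝ)^s)^2 * B^2 := by rw [← pow_add, Nat.add_sub_cancel' ha]
      _ = 4*Λ^2 * Q := by rw [hB, hQdef]; ring
  have hdivμ : (4*Λ^2 * (μ^s)^2)/μ = 4*Λ^2 * T := by
    rw [hT, hμdef]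
    field_simp
  have hUB : ∀ a ∈ Finset.range (s+1),
      (∫ x in usq, (pd1^[a] (pd2^[s - a] (gam1 β₀ β₁ κ t)) x) ^ 2)
        + (∫ x in usq, (pd1^[a] (pd2^[s - a] (gam2 β₀ β₁ κ t)) x) ^ 2)
      ≤ (8*Λ^2 + 16*Λ^2*Q) * T := by
    intro a ha
    have ha' : a ≤ s := Nat.lt_succ_iff.mp (Finset.mem_range.mp ha)
    have r1 : pd1^[a] (pd2^[s - a] (gam1 β₀ β₁ κ t))
        = bf ((-μ)^a * (μ^(s-a) * A)) (π^a * (π^(s-a) * B)) μ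
          (0 + ((s-a : ℕ):ℝ) * (π/2)) (0 + (a:ℝ) * (π/2))
          (-(π/2) + ((s-a : ℕ):ℝ) * (π/2)) := by
      rw [hg1, pd2_iter_bf, pd1_iter_bf]
    have r2 : pd1^[a] (pd2^[s - a] (gam2 β₀ β₁ κ t))
        = bf ((-μ)^a * (μ^(s-a) * A)) (π^a * (π^(s-a) * B)) μ
          (-(π/2) + ((s-a : ℕ):ℝ) * (π/2)) (-(π/2) + (a:ℝ) * (π/2))
          (0 + ((s-a : ℕ):ℝ) * (π/2)) := by
      rw [hg2, pd2_iter_bf, pd1_iter_bf]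
    have i1 := int_bf_sq_le ((-μ)^a * (μ^(s-a) * A)) (π^a * (π^(s-a) * B)) μ
      (0 + ((s-a : ℕ):ℝ) * (π/2)) (0 + (a:ℝ) * (π/2)) (-(π/2) + ((s-a : ℕ):ℝ) * (π/2)) hμ
    have i2 := int_bf_sq_le ((-μ)^a * (μ^(s-a) * A)) (π^a * (π^(s-a) * B)) μ
      (-(π/2) + ((s-a : ℕ):ℝ) * (π/2)) (-(π/2) + (a:ℝ) * (π/2))
      (0 + ((s-a : ℕ):ℝ) * (π/2)) hμ
    rw [r1, r2]
    rw [hA2 a ha', hB2 a ha', hdivμ] at i1 i2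
    have habsorb : 16*Λ^2*Q * 1 ≤ 16*Λ^2*Q * T :=
      mul_le_mul_of_nonneg_left hT1 (by positivity)
    have hgoal : (8*Λ^2 + 16*Λ^2*Q) * T = 8*Λ^2*T + 16*Λ^2*Q*T := by ring
    rw [hgoal]
    linarith
  have hS_le : (∑ a ∈ Finset.range (s + 1),
      ((∫ x in usq, (pd1^[a] (pd2^[s - a] (gam1 β₀ β₁ κ t)) x) ^ 2)
        + (∫ x in usq, (pd1^[a] (pd2^[s - a] (gam2 β₀ β₁ κ t)) x) ^ 2)))
      ≤ cu2 * T := by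
    have h := Finset.sum_le_card_nsmul (Finset.range (s+1)) _ ((8*Λ^2 + 16*Λ^2*Q) * T) hUB
    rw [Finset.card_range, nsmul_eq_mul] at h
    have hc : ((s+1 : ℕ):ℝ) * ((8*Λ^2 + 16*Λ^2*Q) * T) = cu2 * T := by
      rw [hcu2]; push_cast; ring
    rw [hc] at h
    exact h
  have hnonneg : ∀ a ∈ Finset.range (s+1),
      0 ≤ (∫ x in usq, (pd1^[a] (pd2^[s - a] (gam1 β₀ β₁ κ t)) x) ^ 2)
        + (∫ x in usq, (pd1^[a] (pd2^[s - a] (gam2 β₀ β₁ κ t)) x) ^ 2) := by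
    intro a _
    exact add_nonneg (setIntegral_nonneg usq_meas fun x _ => sq_nonneg _)
      (setIntegral_nonneg usq_meas fun x _ => sq_nonneg _)
  have hterm_s : cl2 * T ≤
      (∫ x in usq, (pd1^[s] (pd2^[s - s] (gam1 β₀ β₁ κ t)) x) ^ 2)
        + (∫ x in usq, (pd1^[s] (pd2^[s - s] (gam2 β₀ β₁ κ t)) x) ^ 2) := by
    have r1 : pd1^[s] (pd2^[s - s] (gam1 β₀ β₁ κ t))
        = bf ((-μ)^s * A) (π^s * B) μ 0 (0 + (s:ℝ) * (π/2)) (-(π/2)) := by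
      rw [Nat.sub_self, Function.iterate_zero, id_eq, hg1, pd1_iter_bf]
    have r2 : pd1^[s] (pd2^[s - s] (gam2 β₀ β₁ κ t))
        = bf ((-μ)^s * A) (π^s * B) μ (-(π/2)) (-(π/2) + (s:ℝ) * (π/2)) 0 := by
      rw [Nat.sub_self, Function.iterate_zero, id_eq, hg2, pd1_iter_bf]
    rw [r1, r2]
    have key := int_pair_ge ((-μ)^s * A) (π^s * B) μ (0 + (s:ℝ) * (π/2)) (-(π/2))
      (-(π/2) + (s:ℝ) * (π/2)) 0 hμ
    have hAs : ((-μ)^s * A)^2 = 4*Λ^2 * (μ^s)^2 := by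
      have h := hA2 s le_rfl
      rw [Nat.sub_self, pow_zero, one_mul] at h
      exact h
    have hBs : ((π:ℝ)^s * B)^2 = 4*Λ^2 * Q := by
      have h := hB2 s le_rfl
      rw [Nat.sub_self, pow_zero, one_mul] at h
      exact h
    rw [hAs, hBs] at key
    have hquot : (1 - Real.exp (-(2*μ)))/(2*μ) = (1 - Real.exp (-(2*μ))) * (t/2) := by
      rw [hμdef]; field_simp
    have hexpμ : Real.exp (-(2*μ)) ≤ Real.exp (-2 : ℝ) := by
      apply Real.exp_le_exp.mpr; linarith
    have hmain : Λ^2 * (1 - Real.exp (-2:ℝ)) * T - 8*Λ^2*Q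
        ≤ 4*Λ^2 * (μ^s)^2 / 2 * ((1 - Real.exp (-(2*μ)))/(2*μ)) - 2*(4*Λ^2 * Q) := by
      rw [hquot]
      have expand : 4*Λ^2 * (μ^s)^2 / 2 * ((1 - Real.exp (-(2*μ))) * (t/2))
          = Λ^2 * (1 - Real.exp (-(2*μ))) * T := by rw [hT]; ring
      rw [expand]
      have h1 : (1 - Real.exp (-2:ℝ)) ≤ (1 - Real.exp (-(2*μ))) := by linarith
      have hstep : (1 - Real.exp (-2:ℝ)) * T ≤ (1 - Real.exp (-(2*μ))) * T :=
        mul_le_mul_of_nonneg_right h1 hTpos.le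
      have hstep2 : Λ^2 * ((1 - Real.exp (-2:ℝ)) * T) ≤ Λ^2 * ((1 - Real.exp (-(2*μ))) * T) :=
        mul_le_mul_of_nonneg_left hstep (sq_nonneg Λ)
      nlinarith [hstep2]
    have habs : cl2 * T ≤ Λ^2 * (1 - Real.exp (-2:ℝ)) * T - 8*Λ^2*Q := by
      rw [hcl2]
      have h16 : 16*Q*t < 1 - Real.exp (-2:ℝ) := by
        rw [lt_div_iff₀ (by positivity : (0:ℝ) < 16*Q)] at htQ
        linarith
      have hQT : 16*Q ≤ (1 - Real.exp (-2:ℝ)) * T := by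
        have h1t : 16*Q ≤ (1 - Real.exp (-2:ℝ)) * (1/t) := by
          rw [mul_one_div, le_div_iff₀ ht]
          linarith
        have h2t : (1 - Real.exp (-2:ℝ)) * (1/t) ≤ (1 - Real.exp (-2:ℝ)) * T :=
          mul_le_mul_of_nonneg_left hTt h1e.le
        linarith
      have hstep3 : Λ^2/2 * (16*Q) ≤ Λ^2/2 * ((1 - Real.exp (-2:ℝ)) * T) :=
        mul_le_mul_of_nonneg_left hQT (by positivity)
      nlinarith [hstep3]
    linarith
  have hsum_ge : cl2 * T ≤ ∑ a ∈ Finset.range (s + 1),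
      ((∫ x in usq, (pd1^[a] (pd2^[s - a] (gam1 β₀ β₁ κ t)) x) ^ 2)
        + (∫ x in usq, (pd1^[a] (pd2^[s - a] (gam2 β₀ β₁ κ t)) x) ^ 2)) :=
    le_trans hterm_s (Finset.single_le_sum hnonneg (Finset.self_mem_range_succ s))
  constructor
  · have h1 : Real.sqrt cl2 * t ^ ((1:ℝ)/2 - (s:ℝ)) = Real.sqrt (cl2 * T) := by
      rw [Real.sqrt_mul hcl2pos.le, hsqrtT]
    rw [h1]
    exact Real.sqrt_le_sqrt hsum_ge
  · have h2 : Real.sqrt cu2 * t ^ ((1:ℝ)/2 - (s:ℝ)) = Real.sqrt (cu2 * T) := by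
      rw [Real.sqrt_mul hcu2pos.le, hsqrtT]
    rw [h2]
    exact Real.sqrt_le_sqrt hS_le

end
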